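/- For every invertible complex n×n matrix M, there exists an invertible complex n×n matrix A such that M = A - (A⁻¹)ᴴ, where (A⁻¹)ᴴ denotes the conjugate transpose of the inverse of A. -/

import Mathlib

open Matrix

theorem stmt_3 (n : ℕ) (M : Matrix (Fin n) (Fin n) ℂ) (hM : IsUnit M.det) :
    ∃ A : Matrix (Fin n) (Fin n) ℂ, IsUnit A.det ∧ M = A - (A⁻¹)ᴴ := by
  have hMH : IsUnit Mᴴ.det := by rw [det_conjTranspose, isUnit_iff_ne_zero, star_ne_zero]; exact hM.ne_zero
  set H : Matrix (Fin n) (Fin n) ℂ := Mᴴ * M with hHdef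
  have hH : H.IsHermitian := isHermitian_conjTranspose_mul_self M
  have hHunit : IsUnit H.det := by rw [det_mul]; exact hMH.mul hM
  set lam := hH.eigenvalues with hlamdef
  have hlam0 : ∀ i, lam i ≠ 0 := by
    intro i hi
    have hdet : H.det = ∏ j, (lam j : ℂ) := hH.det_eq_prod_eigenvalues
    have : H.det = 0 := by
      rw [hdet]
      exact Finset.prod_eq_zero (Finset.mem_univ i) (by exact_mod_cast congrArg Complex.ofReal hi)
    exact hHunit.ne_zero this
  have hlampos : ∀ i, 0 < lam i := fun i =>
    lt_of_le_of_ne (eigenvalues_conjTranspose_mul_self_nonneg M i) (Ne.symm (hlam0 i))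
  set U : Matrix (Fin n) (Fin n) ℂ := (hH.eigenvectorUnitary : Matrix (Fin n) (Fin n) ℂ) with hUdef
  have hU1 : U * star U = 1 := (Matrix.mem_unitaryGroup_iff).mp hH.eigenvectorUnitary.2
  have hU2 : star U * U = 1 := (Matrix.mem_unitaryGroup_iff').mp hH.eigenvectorUnitary.2
  set f : Fin n → ℝ := fun i => (1 + Real.sqrt (1 + 4 / lam i)) / 2 with hfdef
  have hkey : ∀ i, f i ^ 2 - f i = 1 / lam i := by
    intro i
    have hpos := hlampos i
    have hs : Real.sqrt (1 + 4 / lam i) ^ 2 = 1 + 4 / lam i :=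
      Real.sq_sqrt (by positivity)
    have : f i ^ 2 - f i = (Real.sqrt (1 + 4 / lam i) ^ 2 - 1) / 4 := by
      simp only [hfdef]; ring
    rw [this, hs]
    field_simp
    ring
  set F : Matrix (Fin n) (Fin n) ℂ := diagonal (fun i => ((f i : ℝ) : ℂ)) with hFdef
  set B : Matrix (Fin n) (Fin n) ℂ := U * F * star U with hBdef
  have hFH : Fᴴ = F := by
    rw [hFdef, diagonal_conjTranspose, diagonal_eq_diagonal_iff]
    intro i
    exact Complex.conj_ofReal _
  have hBH : Bᴴ = B := by
    rw [hBdef, conjTranspose_mul, conjTranspose_mul, hFH]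
    simp [star_eq_conjTranspose, mul_assoc]
  have hspec : H = U * diagonal (RCLike.ofReal ∘ lam) * star U := hH.spectral_theorem
  have hBB : B * B - B = U * (F * F - F) * star U := by
    have : B * B = U * (F * F) * star U := by
      rw [hBdef]
      calc U * F * star U * (U * F * star U)
          = U * F * (star U * U) * F * star U := by noncomm_ring
        _ = U * (F * F) * star U := by rw [hU2]; noncomm_ring
    rw [this, hBdef]
    noncomm_ring
  have hDF : diagonal (RCLike.ofReal ∘ lam) * (F * F - F) = 1 := by
    rw [hFdef, diagonal_mul_diagonal, diagonal_sub, diagonal_mul_diagonal, ← diagonal_one,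
      diagonal_eq_diagonal_iff]
    intro i
    simp only [Function.comp_apply]
    have hr : lam i * (f i * f i - f i) = 1 := by
      rw [show f i * f i = f i ^ 2 from (sq (f i)).symm, hkey i, mul_one_div]
      exact div_self (hlam0 i)
    have hc : (Complex.ofReal (lam i)) *
        (Complex.ofReal (f i) * Complex.ofReal (f i) - Complex.ofReal (f i)) = 1 := by
      rw [show Complex.ofReal (f i) * Complex.ofReal (f i) - Complex.ofReal (f i)
            = Complex.ofReal (f i * f i - f i) by push_cast; ring,
        ← Complex.ofReal_mul, hr, Complex.ofReal_one]
    exact hc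
  have hB2 : H * (B * B - B) = 1 := by
    rw [hBB, hspec]
    calc U * diagonal (RCLike.ofReal ∘ lam) * star U * (U * (F * F - F) * star U)
        = U * (diagonal (RCLike.ofReal ∘ lam) * (star U * U) * (F * F - F)) * star U := by
          noncomm_ring
      _ = 1 := by rw [hU2, mul_one, hDF, mul_one, hU1]
  have hHinv : H⁻¹ = B * B - B := inv_eq_right_inv hB2
  set A : Matrix (Fin n) (Fin n) ℂ := M * B with hAdef
  have hAC : A * ((B - 1) * Mᴴ) = 1 := by
    have h1 : A * ((B - 1) * Mᴴ) = M * (B * B - B) * Mᴴ := by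
      rw [hAdef]; noncomm_ring
    rw [h1, ← hHinv, hHdef, Matrix.mul_inv_rev, ← Matrix.mul_assoc,
      Matrix.mul_nonsing_inv M hM, Matrix.one_mul, Matrix.nonsing_inv_mul Mᴴ hMH]
  refine ⟨A, isUnit_det_of_right_inverse hAC, ?_⟩
  rw [inv_eq_right_inv hAC, conjTranspose_mul, conjTranspose_conjTranspose,
    conjTranspose_sub, hBH, conjTranspose_one, hAdef]
  noncomm_ring
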